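/- Let R ≅ R_(1) × ⋯ × R_(ρ) be a finite commutative principal ideal ring decomposed into finite chain rings, S = S_(1) × ⋯ × S_(ρ) a Galois extension of R of degree m with coordinate projections Φ_(j) extended coefficient-by-coefficient. Let C be an S-submodule of S^n, y ∈ S^n, and t a positive integer. Then there exist e ∈ S^n and c ∈ C with y = c + e and rk_R(e) ≤ t if and only if for every j ∈ {1,…,ρ} there exist e_(j) ∈ S_(j)^n and c_(j) ∈ Φ_(j)(C) with Φ_(j)(y) = c_(j) + e_(j) and rk_{R_(j)}(e_(j)) ≤ t. -/

import Mathlib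

open IsLocalRing

/-- The rank of a submodule `N`: the smallest number of elements generating `N`. -/
noncomputable def subrank {R M : Type*} [Semiring R] [AddCommMonoid M] [Module R M]
    (N : Submodule R M) : ℕ :=
  sInf {k | ∃ f : Fin k → M, Submodule.span R (Set.range f) = N}

/-- The rank of a vector `u ∈ S^n` over `R`: the smallest number of generators of the
`R`-submodule of `S` generated by the coordinates of `u` (i.e. of the support of `u`). -/
noncomputable def vecrank (R : Type*) {S : Type*} {n : ℕ} [Semiring R] [AddCommMonoid S]
    [Module R S] (u : Fin n → S) : ℕ :=
  subrank (Submodule.span R (Set.range u))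

/-- The minimum rank distance of a linear code `C ⊆ S^n`, ranks being taken over `K`. -/
noncomputable def minrkdist (K : Type*) {S : Type*} {n : ℕ} [Semiring K] [Ring S]
    [Module K S] (C : Submodule S (Fin n → S)) : ℕ :=
  sInf {d | ∃ u ∈ C, ∃ v ∈ C, u ≠ v ∧ vecrank K (u - v) = d}

section aux
variable {ι : Type*} [Fintype ι] [DecidableEq ι] {R S : ι → Type*}
  [∀ j, Semiring (R j)] [∀ j, AddCommMonoid (S j)] [∀ j, Module (R j) (S j)]

lemma single_mem_piSpan {X : Set (∀ j, S j)} {j : ι} {w : S j}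
    (hw : w ∈ Submodule.span (R j) ((fun v => v j) '' X)) :
    Pi.single j w ∈ Submodule.span (∀ j, R j) X := by
  induction hw using Submodule.span_induction with
  | mem x hx =>
    obtain ⟨v, hv, rfl⟩ := hx
    have : Pi.single j (v j) = (Pi.single j (1 : R j)) • v := by
      ext k
      rcases eq_or_ne k j with rfl | hk
      · simp
      · simp [Pi.single_eq_of_ne hk]
    rw [this]
    exact Submodule.smul_mem _ _ (Submodule.subset_span hv)
  | zero => simp
  | add x y _ _ ihx ihy => rw [Pi.single_add]; exact add_mem ihx ihy
  | smul r x _ ih =>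
    have : Pi.single j (r • x) = (Pi.single j r : ∀ j, R j) • Pi.single j x := by
      ext k
      rcases eq_or_ne k j with rfl | hk
      · simp
      · simp [Pi.single_eq_of_ne hk]
    rw [this]
    exact Submodule.smul_mem _ _ ih

lemma mem_piSpan_iff {X : Set (∀ j, S j)} {v : ∀ j, S j} :
    v ∈ Submodule.span (∀ j, R j) X ↔
      ∀ j, v j ∈ Submodule.span (R j) ((fun w => w j) '' X) := by
  constructor
  · intro hv j
    induction hv using Submodule.span_induction with
    | mem x hx => exact Submodule.subset_span ⟨x, hx, rfl⟩
    | zero => simp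
    | add x y _ _ ihx ihy => exact add_mem ihx ihy
    | smul r x _ ih => exact Submodule.smul_mem _ (r j) ih
  · intro h
    have hv : v = ∑ j, Pi.single j (v j) := (Finset.univ_sum_single v).symm
    rw [hv]
    exact Submodule.sum_mem _ fun j _ => single_mem_piSpan (h j)

lemma proj_piSpan (X : Set (∀ j, S j)) (j : ι) :
    (fun v : (∀ j, S j) => v j) '' ((Submodule.span (∀ j, R j) X : Submodule (∀ j, R j) (∀ j, S j)) : Set (∀ j, S j)) =
      (Submodule.span (R j) ((fun w => w j) '' X) : Set _) := by
  ext w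
  constructor
  · rintro ⟨v, hv, rfl⟩
    exact (mem_piSpan_iff.mp hv) j
  · intro hw
    exact ⟨Pi.single j w, single_mem_piSpan hw, Pi.single_eq_same j w⟩

end aux

lemma pad_span {R M : Type*} [Semiring R] [AddCommMonoid M] [Module R M] {k t : ℕ}
    (hkt : k ≤ t) (f : Fin k → M) :
    ∃ g : Fin t → M,
      Submodule.span R (Set.range g) = Submodule.span R (Set.range f) := by
  refine ⟨fun i => if h : (i : ℕ) < k then f ⟨i, h⟩ else 0, le_antisymm ?_ ?_⟩
  · rw [Submodule.span_le]
    rintro _ ⟨i, rfl⟩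
    by_cases h : (i : ℕ) < k
    · simp only [dif_pos h]
      exact Submodule.subset_span ⟨_, rfl⟩
    · simp [dif_neg h]
  · rw [Submodule.span_le]
    rintro _ ⟨i, rfl⟩
    have : f i = (fun (i : Fin t) => if h : (i : ℕ) < k then f ⟨i, h⟩ else 0)
        ⟨i, lt_of_lt_of_le i.2 hkt⟩ := by simp [i.2]
    rw [this]
    exact Submodule.subset_span ⟨_, rfl⟩

lemma vecrank_le_iff {R S : Type*} {n : ℕ} [Semiring R] [AddCommMonoid S] [Module R S]
    (u : Fin n → S) (t : ℕ) :
    vecrank R u ≤ t ↔ ∃ f : Fin t → S,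
      Submodule.span R (Set.range f) = Submodule.span R (Set.range u) := by
  constructor
  · intro h
    have hne : {k | ∃ f : Fin k → S,
        Submodule.span R (Set.range f) = Submodule.span R (Set.range u)}.Nonempty :=
      ⟨n, u, rfl⟩
    obtain ⟨f, hf⟩ := Nat.sInf_mem hne
    obtain ⟨g, hg⟩ := pad_span (R := R) h f
    exact ⟨g, hg.trans hf⟩
  · rintro ⟨f, hf⟩
    exact Nat.sInf_le ⟨f, hf⟩
lemma proj_code {ι : Type*} [DecidableEq ι] {S : ι → Type*} [∀ j, Semiring (S j)] {n : ℕ}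
    (C : Submodule (∀ j, S j) (Fin n → ∀ j, S j)) (j : ι) {x : Fin n → S j}
    (hx : x ∈ Submodule.span (S j)
      ((fun (v : Fin n → ∀ j, S j) (i : Fin n) => v i j) '' (C : Set _))) :
    ∃ w ∈ C, (fun i => w i j) = x := by
  induction hx using Submodule.span_induction with
  | mem x hx => obtain ⟨v, hv, rfl⟩ := hx; exact ⟨v, hv, rfl⟩
  | zero => exact ⟨0, C.zero_mem, rfl⟩
  | add a b _ _ iha ihb =>
    obtain ⟨v, hv, rfl⟩ := iha; obtain ⟨w, hw, rfl⟩ := ihb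
    exact ⟨v + w, C.add_mem hv hw, rfl⟩
  | smul s a _ ih =>
    obtain ⟨v, hv, rfl⟩ := ih
    refine ⟨(Pi.single j s : ∀ j, S j) • v, C.smul_mem _ hv, ?_⟩
    funext i
    show (Pi.single j s : ∀ j, S j) j • v i j = s • v i j
    rw [Pi.single_eq_same]


/-- Let `R ≅ R₁ × ⋯ × R_ρ` be a finite commutative principal ideal ring
decomposed into finite chain rings, `S = S₁ × ⋯ × S_ρ` a Galois extension of `R` of degree
`m` with coordinate projections `Φⱼ` extended coefficient-by-coefficient.  Let `C` be an
`S`-submodule of `S^n`, `y ∈ S^n` and `t` a positive integer.  Then there exist `e ∈ S^n`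
and `c ∈ C` with `y = c + e` and `rk_R(e) ≤ t` if and only if for every `j` there exist
`eⱼ ∈ Sⱼ^n` and `cⱼ ∈ Φⱼ(C)` with `Φⱼ(y) = cⱼ + eⱼ` and `rk_{Rⱼ}(eⱼ) ≤ t`. -/
theorem rankDecoding_iff_rankDecoding_of_projections
    (ι : Type*) [Fintype ι] [Nonempty ι] (Rc Sc : ι → Type*)
    [∀ j, CommRing (Rc j)] [∀ j, Finite (Rc j)] [∀ j, IsLocalRing (Rc j)]
    [∀ j, IsPrincipalIdealRing (Rc j)]
    [∀ j, CommRing (Sc j)] [∀ j, Finite (Sc j)] [∀ j, IsLocalRing (Sc j)]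
    [∀ j, IsPrincipalIdealRing (Sc j)]
    [∀ j, Algebra (Rc j) (Sc j)] [∀ j, Module.Free (Rc j) (Sc j)]
    (m : ℕ) (hm : ∀ j, Module.finrank (Rc j) (Sc j) = m)
    (hGal : ∀ j, maximalIdeal (Sc j) =
      Ideal.map (algebraMap (Rc j) (Sc j)) (maximalIdeal (Rc j)))
    (n : ℕ) (C : Submodule (∀ j, Sc j) (Fin n → ∀ j, Sc j))
    (y : Fin n → ∀ j, Sc j) (t : ℕ) (ht : 0 < t) :
    (∃ e : Fin n → ∀ j, Sc j, ∃ c ∈ C, y = c + e ∧ vecrank (∀ j, Rc j) e ≤ t) ↔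
    (∀ j, ∃ e : Fin n → Sc j,
      ∃ c ∈ Submodule.span (Sc j)
        ((fun (v : Fin n → ∀ j, Sc j) (i : Fin n) => v i j) ''
          (C : Set (Fin n → ∀ j, Sc j))),
      (fun i => y i j) = c + e ∧ vecrank (Rc j) e ≤ t) := by
  classical
  constructor
  · rintro ⟨e, c, hc, rfl, he⟩ j
    refine ⟨fun i => e i j, fun i => c i j, Submodule.subset_span ⟨c, hc, rfl⟩, rfl, ?_⟩
    rw [vecrank_le_iff] at he ⊢
    obtain ⟨f, hf⟩ := he
    refine ⟨fun i => f i j, ?_⟩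
    have h1 : Set.range (fun i => f i j) =
        (fun v : (∀ j, Sc j) => v j) '' Set.range f := by
      rw [← Set.range_comp]; rfl
    have h2 : Set.range (fun i => e i j) =
        (fun v : (∀ j, Sc j) => v j) '' Set.range e := by
      rw [← Set.range_comp]; rfl
    apply SetLike.coe_injective
    rw [h1, h2, ← proj_piSpan (R := Rc) (Set.range f) j,
      ← proj_piSpan (R := Rc) (Set.range e) j, hf]
  · intro h
    choose e' c' hc' hy' he' using h
    have hlift : ∀ j, ∃ v, v ∈ C ∧ (fun i => v i j) = c' j := by
      intro j
      obtain ⟨v, hv, hv'⟩ := proj_code C j (hc' j)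
      exact ⟨v, hv, hv'⟩
    choose wv hwC hwproj using hlift
    set c : Fin n → ∀ j, Sc j := fun i j => wv j i j with hc
    have hcC : c ∈ C := by
      have hsum : c = ∑ j, (Pi.single j (1 : Sc j) : ∀ k, Sc k) • wv j := by
        funext i k
        rw [Finset.sum_apply, Finset.sum_apply]
        rw [Finset.sum_eq_single k]
        · simp [hc]
        · intro b _ hb
          have : (Pi.single b (1 : Sc b) : ∀ k, Sc k) k = 0 :=
            Pi.single_eq_of_ne (Ne.symm hb) 1
          simp [this]
        · simp
      rw [hsum]
      exact Submodule.sum_mem _ fun j _ => C.smul_mem _ (hwC j)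
    have hecomp : ∀ j, (fun i => (y - c) i j) = e' j := by
      intro j
      funext i
      have hyj : y i j = c' j i + e' j i := by
        have := congrFun (hy' j) i
        simpa using this
      have hcj : c i j = c' j i := congrFun (hwproj j) i
      show y i j - c i j = e' j i
      rw [hyj, hcj]
      ring
    refine ⟨y - c, c, hcC, by abel, ?_⟩
    rw [vecrank_le_iff]
    have hf : ∀ j, ∃ f : Fin t → Sc j, Submodule.span (Rc j) (Set.range f) =
        Submodule.span (Rc j) (Set.range (e' j)) :=
      fun j => (vecrank_le_iff _ _).mp (he' j)
    choose f hfspan using hf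
    refine ⟨fun i j => f j i, ?_⟩
    apply Submodule.ext
    intro v
    rw [mem_piSpan_iff, mem_piSpan_iff]
    refine forall_congr' fun j => ?_
    have h1 : (fun w : (∀ j, Sc j) => w j) '' Set.range (fun i (j : ι) => f j i) =
        Set.range (f j) := by
      rw [← Set.range_comp]; rfl
    have h2 : (fun w : (∀ j, Sc j) => w j) '' Set.range (y - c) =
        Set.range (e' j) := by
      rw [← Set.range_comp]
      exact congrArg Set.range (hecomp j)
    rw [h1, h2, hfspan j]
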